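/- Let B(n) = 2^{n + \binom{n}{3}}. For every c' > 0 there exists n₁ such that the following holds: if I : ℕ → ℝ_{≥0} satisfies, for every n ≥ n₁, I(n) < (1 + 2^{−c'·n})·B(n) + 2^{(1−c')·\binom{n}{2}}·I(n−1) + 2^{(1−c')·3·\binom{n}{2}}·I(n−3), then there exists a constant Δ such that I(n) ≤ (1 + Δ·2^{−c'·n})·B(n) for all n. -/

import Mathlib

noncomputable def Bfun (n : ℕ) : ℝ := 2 ^ (n + n.choose 3)

lemma cast_choose_three (n : ℕ) :
    ((n.choose 3 : ℕ) : ℝ) = n * (n - 1) * (n - 2) / 6 := by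
  induction n with
  | zero => simp
  | succ n ih =>
    rw [show n + 1 = n.succ from rfl, show (3:ℕ) = Nat.succ 2 from rfl,
      Nat.choose_succ_succ]
    push_cast [ih, Nat.cast_choose_two]
    ring

lemma Bfun_rpow (n : ℕ) : Bfun n = (2:ℝ) ^ ((n:ℝ) + (n.choose 3 : ℝ)) := by
  rw [Bfun, ← Real.rpow_natCast]
  push_cast
  ring_nf

lemma Bfun_pos (n : ℕ) : 0 < Bfun n := by
  rw [Bfun_rpow]; positivity

lemma rp2_add (a b : ℝ) : (2:ℝ) ^ a * (2:ℝ) ^ b = (2:ℝ) ^ (a + b) :=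
  (Real.rpow_add two_pos a b).symm

lemma rp2_le {a b : ℝ} (h : a ≤ b) : (2:ℝ) ^ a ≤ (2:ℝ) ^ b :=
  Real.rpow_le_rpow_of_exponent_le one_le_two h


lemma exp_ineqs {c' x : ℝ} (hc' : 0 < c') (hx10 : 10 ≤ x)
    (h7 : 7 + 9 * c' ≤ c' * (x - 1)) :
    x - 2 - c' * (x * (x - 1) / 2) ≤ -(c' * x) - 3 * c' - 2 ∧
    6 * x - 13 - 3 * c' * (x * (x - 1) / 2) ≤ -(c' * x) - 3 * c' - 2 := by
  have hP : x * (7 + 9 * c') ≤ x * (c' * (x - 1)) :=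
    mul_le_mul_of_nonneg_left h7 (by linarith : (0:ℝ) ≤ x)
  have hQ : c' * 10 ≤ c' * x := mul_le_mul_of_nonneg_left hx10 hc'.le
  constructor <;> nlinarith [hP, hQ]

lemma final_combination {Δ u A C v w : ℝ} (hΔ : 4 ≤ Δ) (hu : 0 < u)
    (hu1 : u ≤ 1) (hA : 0 ≤ A) (hC : 0 ≤ C) (hA4 : A ≤ u / 4)
    (hC4 : C ≤ u / 4) (hAv : A * v ≤ u / 4) (hCw : C * w ≤ u / 4) :
    (1 + u) + (1 + Δ * (v * u)) * A + (1 + Δ * (w * u)) * C ≤ 1 + Δ * u := by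
  have hΔu : (0:ℝ) ≤ Δ * u := by positivity
  nlinarith [mul_le_mul_of_nonneg_left hAv hΔu,
    mul_le_mul_of_nonneg_left hCw hΔu,
    mul_le_mul_of_nonneg_left hu1 hΔu,
    mul_nonneg (by linarith : (0:ℝ) ≤ Δ - 4) hu.le]

theorem recursion_implies_asymptotics (c' : ℝ) (hc' : 0 < c') :
    ∃ n₁ : ℕ, ∀ I : ℕ → ℝ, (∀ n, 0 ≤ I n) →
      (∀ n : ℕ, n₁ ≤ n →
        I n < (1 + 2 ^ (-(c' * n))) * Bfun n
          + 2 ^ ((1 - c') * (n.choose 2 : ℝ)) * I (n - 1)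
          + 2 ^ ((1 - c') * 3 * (n.choose 2 : ℝ)) * I (n - 3)) →
      ∃ Δ : ℝ, ∀ n : ℕ, I n ≤ (1 + Δ * 2 ^ (-(c' * n))) * Bfun n := by
  refine ⟨max 10 (⌈7 / c'⌉₊ + 10), fun I hI hrec => ?_⟩
  set n₀ : ℕ := max 10 (⌈7 / c'⌉₊ + 10) with hn₀
  set Δ : ℝ := 4 + ∑ k ∈ Finset.range n₀, I k * 2 ^ (c' * k) / Bfun k with hΔ
  have hΔ4 : (4:ℝ) ≤ Δ := by
    have : (0:ℝ) ≤ ∑ k ∈ Finset.range n₀, I k * 2 ^ (c' * k) / Bfun k :=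
      Finset.sum_nonneg fun k _ => by
        have := hI k; have := (Bfun_pos k).le; positivity
    simp only [hΔ]; linarith
  refine ⟨Δ, fun n => ?_⟩
  induction n using Nat.strong_induction_on with
  | _ n IH =>
  rcases lt_or_ge n n₀ with hlt | hge
  · -- base case: small n, handled by the choice of Δ
    have hterm : I n * 2 ^ (c' * n) / Bfun n ≤ Δ := by
      have h1 : I n * 2 ^ (c' * n) / Bfun n ≤
          ∑ k ∈ Finset.range n₀, I k * 2 ^ (c' * k) / Bfun k :=
        Finset.single_le_sum (f := fun k => I k * 2 ^ (c' * k) / Bfun k)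
          (fun k _ => by have := hI k; have := (Bfun_pos k).le; positivity)
          (Finset.mem_range.2 hlt)
      simp only [hΔ]; linarith
    have hB := Bfun_pos n
    have h1 : (2:ℝ) ^ (c' * n) * 2 ^ (-(c' * n)) = 1 := by
      rw [rp2_add]; simp
    have hpos : (0:ℝ) < 2 ^ (-(c' * n)) * Bfun n := by positivity
    calc I n = I n * ((2:ℝ) ^ (c' * n) * 2 ^ (-(c' * n))) * (Bfun n / Bfun n) := by
            rw [h1, div_self hB.ne']; ring
      _ = (I n * 2 ^ (c' * n) / Bfun n) * (2 ^ (-(c' * n)) * Bfun n) := by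
            ring
      _ ≤ Δ * (2 ^ (-(c' * n)) * Bfun n) := by
            exact mul_le_mul_of_nonneg_right hterm hpos.le
      _ ≤ (1 + Δ * 2 ^ (-(c' * n))) * Bfun n := by nlinarith [hB, hpos]
  · -- inductive step
    have hn10 : 10 ≤ n := le_trans (le_max_left _ _) hge
    have h7 : 7 + 9 * c' ≤ c' * ((n:ℝ) - 1) := by
      have h1 : (⌈7 / c'⌉₊ + 10 : ℕ) ≤ n := le_trans (le_max_right _ _) hge
      have h2 : 7 / c' ≤ (⌈7 / c'⌉₊ : ℝ) := Nat.le_ceil _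
      have h3 : (⌈7 / c'⌉₊ : ℝ) + 10 ≤ (n:ℝ) := by exact_mod_cast h1
      have h4 : 7 / c' + 9 ≤ (n:ℝ) - 1 := by linarith
      have h5 := mul_le_mul_of_nonneg_left h4 hc'.le
      rw [mul_add, mul_div_cancel₀ _ hc'.ne'] at h5
      linarith
    set x : ℝ := (n : ℝ) with hx
    have hx10 : (10:ℝ) ≤ x := by rw [hx]; exact_mod_cast hn10
    -- casts
    have hc1 : ((n - 1 : ℕ) : ℝ) = x - 1 := by
      rw [Nat.cast_sub (by omega)]; norm_num [hx]
    have hc3 : ((n - 3 : ℕ) : ℝ) = x - 3 := by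
      rw [Nat.cast_sub (by omega)]; norm_num [hx]
    have hch2 : ((n.choose 2 : ℕ) : ℝ) = x * (x - 1) / 2 := Nat.cast_choose_two ℝ n
    have hch3 : ((n.choose 3 : ℕ) : ℝ) = x * (x - 1) * (x - 2) / 6 := cast_choose_three n
    have hch3a : (((n - 1).choose 3 : ℕ) : ℝ) = (x - 1) * (x - 2) * (x - 3) / 6 := by
      rw [cast_choose_three, hc1]; ring
    have hch3b : (((n - 3).choose 3 : ℕ) : ℝ) = (x - 3) * (x - 4) * (x - 5) / 6 := by
      rw [cast_choose_three, hc3]; ring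
    -- IH applications
    have IH1 := IH (n - 1) (by omega)
    have IH3 := IH (n - 3) (by omega)
    rw [Bfun_rpow, hc1, hch3a] at IH1
    rw [Bfun_rpow, hc3, hch3b] at IH3
    have hrecn := hrec n hge
    rw [Bfun_rpow n, hch2, hch3] at hrecn
    rw [Bfun_rpow n, hch3]
    rw [← hx] at hrecn ⊢
    -- abbreviations
    set u : ℝ := (2:ℝ) ^ (-(c' * x)) with hu
    have hu_pos : 0 < u := Real.rpow_pos_of_pos two_pos _
    have hu_le1 : u ≤ 1 :=
      Real.rpow_le_one_of_one_le_of_nonpos one_le_two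
        (by have := mul_nonneg hc'.le (by linarith : (0:ℝ) ≤ x); linarith)
    set A : ℝ := (2:ℝ) ^ (x - 2 - c' * (x * (x - 1) / 2)) with hA
    set C : ℝ := (2:ℝ) ^ (6 * x - 13 - 3 * c' * (x * (x - 1) / 2)) with hC
    have hA_pos : 0 < A := Real.rpow_pos_of_pos two_pos _
    have hC_pos : 0 < C := Real.rpow_pos_of_pos two_pos _
    -- exponent inequalities
    obtain ⟨hE1, hE3⟩ := exp_ineqs hc' hx10 h7
    have h2neg2 : (2:ℝ) ^ (-2 : ℝ) = 1 / 4 := by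
      rw [show (-2:ℝ) = ((-2:ℤ):ℝ) by norm_num, Real.rpow_intCast]
      norm_num
    have hquarter : (2:ℝ) ^ (-(c' * x) - 2) = u / 4 := by
      rw [show -(c' * x) - 2 = -(c' * x) + (-2) by ring, Real.rpow_add two_pos,
        h2neg2, hu]
      ring
    have hA4 : A ≤ u / 4 := by
      rw [← hquarter]
      exact rp2_le (by linarith)
    have hC4 : C ≤ u / 4 := by
      rw [← hquarter]
      exact rp2_le (by linarith)
    have hAv : A * (2:ℝ) ^ (c' * 1) ≤ u / 4 := by
      rw [hA, rp2_add, ← hquarter]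
      exact rp2_le (by linarith)
    have hCw : C * (2:ℝ) ^ (c' * 3) ≤ u / 4 := by
      rw [hC, rp2_add, ← hquarter]
      exact rp2_le (by linarith)
    -- rewrite the shifted powers
    have hshift1 : (2:ℝ) ^ (-(c' * (x - 1))) = (2:ℝ) ^ (c' * 1) * u := by
      rw [hu, rp2_add]; ring_nf
    have hshift3 : (2:ℝ) ^ (-(c' * (x - 3))) = (2:ℝ) ^ (c' * 3) * u := by
      rw [hu, rp2_add]; ring_nf
    rw [hshift1] at IH1
    rw [hshift3] at IH3
    -- product identities
    have hprod1 : (2:ℝ) ^ ((1 - c') * (x * (x - 1) / 2)) *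
        (2:ℝ) ^ ((x - 1) + (x - 1) * (x - 2) * (x - 3) / 6)
        = (2:ℝ) ^ (x + x * (x - 1) * (x - 2) / 6) * A := by
      rw [hA, rp2_add, rp2_add]; ring_nf
    have hprod3 : (2:ℝ) ^ ((1 - c') * 3 * (x * (x - 1) / 2)) *
        (2:ℝ) ^ ((x - 3) + (x - 3) * (x - 4) * (x - 5) / 6)
        = (2:ℝ) ^ (x + x * (x - 1) * (x - 2) / 6) * C := by
      rw [hC, rp2_add, rp2_add]; ring_nf
    set Bn : ℝ := (2:ℝ) ^ (x + x * (x - 1) * (x - 2) / 6) with hBn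
    have hBn_pos : 0 < Bn := Real.rpow_pos_of_pos two_pos _
    have hT1_pos : (0:ℝ) < (2:ℝ) ^ ((1 - c') * (x * (x - 1) / 2)) :=
      Real.rpow_pos_of_pos two_pos _
    have hT3_pos : (0:ℝ) < (2:ℝ) ^ ((1 - c') * 3 * (x * (x - 1) / 2)) :=
      Real.rpow_pos_of_pos two_pos _
    -- bound the two recursion terms
    have hterm1 : (2:ℝ) ^ ((1 - c') * (x * (x - 1) / 2)) * I (n - 1)
        ≤ (1 + Δ * ((2:ℝ) ^ (c' * 1) * u)) * (Bn * A) := by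
      calc (2:ℝ) ^ ((1 - c') * (x * (x - 1) / 2)) * I (n - 1)
          ≤ (2:ℝ) ^ ((1 - c') * (x * (x - 1) / 2)) *
            ((1 + Δ * ((2:ℝ) ^ (c' * 1) * u)) *
              (2:ℝ) ^ ((x - 1) + (x - 1) * (x - 2) * (x - 3) / 6)) :=
            mul_le_mul_of_nonneg_left IH1 hT1_pos.le
        _ = (1 + Δ * ((2:ℝ) ^ (c' * 1) * u)) * (Bn * A) := by
            rw [← hprod1]; ring
    have hterm3 : (2:ℝ) ^ ((1 - c') * 3 * (x * (x - 1) / 2)) * I (n - 3)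
        ≤ (1 + Δ * ((2:ℝ) ^ (c' * 3) * u)) * (Bn * C) := by
      calc (2:ℝ) ^ ((1 - c') * 3 * (x * (x - 1) / 2)) * I (n - 3)
          ≤ (2:ℝ) ^ ((1 - c') * 3 * (x * (x - 1) / 2)) *
            ((1 + Δ * ((2:ℝ) ^ (c' * 3) * u)) *
              (2:ℝ) ^ ((x - 3) + (x - 3) * (x - 4) * (x - 5) / 6)) :=
            mul_le_mul_of_nonneg_left IH3 hT3_pos.le
        _ = (1 + Δ * ((2:ℝ) ^ (c' * 3) * u)) * (Bn * C) := by
            rw [← hprod3]; ring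
    -- final combination
    have hmain : (1 + u) + (1 + Δ * ((2:ℝ) ^ (c' * 1) * u)) * A
        + (1 + Δ * ((2:ℝ) ^ (c' * 3) * u)) * C ≤ 1 + Δ * u :=
      final_combination hΔ4 hu_pos hu_le1 hA_pos.le hC_pos.le hA4 hC4 hAv hCw
    refine le_of_lt ?_
    calc I n < (1 + u) * Bn
          + (2:ℝ) ^ ((1 - c') * (x * (x - 1) / 2)) * I (n - 1)
          + (2:ℝ) ^ ((1 - c') * 3 * (x * (x - 1) / 2)) * I (n - 3) := hrecn
      _ ≤ (1 + u) * Bn + (1 + Δ * ((2:ℝ) ^ (c' * 1) * u)) * (Bn * A)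
          + (1 + Δ * ((2:ℝ) ^ (c' * 3) * u)) * (Bn * C) := by linarith
      _ = ((1 + u) + (1 + Δ * ((2:ℝ) ^ (c' * 1) * u)) * A
          + (1 + Δ * ((2:ℝ) ^ (c' * 3) * u)) * C) * Bn := by ring
      _ ≤ (1 + Δ * u) * Bn := mul_le_mul_of_nonneg_right hmain hBn_pos.le
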